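/- Let G be a group with finite generating set Σ such that the outer automorphism group Out(G) = Aut(G)/Inn(G) is finite, of cardinality d. Then for every n ∈ ℕ, α_{G,Σ}(n) ≤ γ_{G,Σ}(n) ≤ d · α_{G,Σ}(n), where γ_{G,Σ}(n) is the number of conjugacy classes of G containing an element of word length at most n and α_{G,Σ}(n) is the number of Aut(G)-orbits of G containing an element of word length at most n. In particular the automorphic growth function of G is equivalent (∼) to its conjugacy growth function. -/

import Mathlib

/-- The ball of radius `n` in a group with respect to a generating set `S`:
elements expressible as a product of at most `n` elements of `S ∪ S⁻¹`. -/
def wordBall {G : Type*} [Group G] (S : Set G) (n : ℕ) : Set G :=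
  {g | ∃ l : List G, (∀ x ∈ l, x ∈ S ∨ x⁻¹ ∈ S) ∧ l.length ≤ n ∧ l.prod = g}

/-- The automorphic growth function: the number of `Aut G`-orbits of `G`
containing an element of word length at most `n` with respect to `S`. -/
noncomputable def autGrowth {G : Type*} [Group G] (S : Set G) (n : ℕ) : ℕ :=
  Set.ncard (Quotient.mk (MulAction.orbitRel (MulAut G) G) '' wordBall S n)

def GrowthLe (f g : ℕ → ℕ) : Prop :=
  ∃ lam : ℕ, 0 < lam ∧ ∀ n, f n ≤ lam * g (lam * n + lam) + lam

def GrowthEquiv (f g : ℕ → ℕ) : Prop := GrowthLe f g ∧ GrowthLe g f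


/-- The conjugacy growth function: the number of conjugacy classes of `G`
containing an element of word length at most `n` with respect to `S`. -/
noncomputable def conjGrowth {G : Type*} [Group G] (S : Set G) (n : ℕ) : ℕ :=
  Set.ncard ((ConjClasses.mk : G → ConjClasses G) '' wordBall S n)


open Pointwise

lemma prod_mem_pow' {G : Type*} [Group G] (T : Set G) (h1 : (1:G) ∈ T) :
    ∀ n (l : List G), (∀ x ∈ l, x ∈ T) → l.length ≤ n → l.prod ∈ T ^ n := by
  intro n
  induction n with
  | zero =>
    intro l hl hlen
    have : l = [] := List.length_eq_zero_iff.mp (Nat.le_zero.mp hlen)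
    simp [this]
  | succ n ih =>
    intro l hl hlen
    rw [pow_succ']
    match l with
    | [] =>
      simpa using Set.mul_mem_mul h1 (ih [] (by simp) (by simp))
    | a :: t =>
      simp only [List.prod_cons]
      exact Set.mul_mem_mul (hl a (by simp)) (ih t (fun x hx => hl x (by simp [hx]))
        (by simpa using Nat.succ_le_succ_iff.mp hlen))

lemma finite_pow' {G : Type*} [Group G] {T : Set G} (h : T.Finite) :
    ∀ n, (T ^ n : Set G).Finite := by
  intro n
  induction n with
  | zero => simpa using Set.finite_singleton (1:G)
  | succ n ih => rw [pow_succ]; exact ih.mul h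

lemma wordBall_finite {G : Type*} [Group G] (S : Finset G) (n : ℕ) :
    (wordBall (S : Set G) n).Finite := by
  have hT : ((S : Set G) ∪ (S : Set G)⁻¹ ∪ {1}).Finite :=
    ((S.finite_toSet.union S.finite_toSet.inv).union (Set.finite_singleton 1))
  apply (finite_pow' hT n).subset
  rintro g ⟨l, hl, hlen, rfl⟩
  apply prod_mem_pow' _ (by simp) n l _ hlen
  intro x hx
  rcases hl x hx with h | h
  · exact Or.inl (Or.inl h)
  · exact Or.inl (Or.inr (by simpa using h))

lemma wordBall_mono {G : Type*} [Group G] (S : Set G) {n m : ℕ} (h : n ≤ m) :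
    wordBall S n ⊆ wordBall S m := by
  rintro g ⟨l, hl, hlen, rfl⟩
  exact ⟨l, hl, hlen.trans h, rfl⟩

/-- Conjugate elements lie in the same `MulAut`-orbit. -/
def conjToOrbit {G : Type*} [Group G] :
    ConjClasses G → Quotient (MulAction.orbitRel (MulAut G) G) :=
  Quotient.lift (Quotient.mk (MulAction.orbitRel (MulAut G) G)) (by
    intro a b h
    obtain ⟨c, hc⟩ := isConj_iff.mp (ConjClasses.mk_eq_mk_iff_isConj.mp (Quotient.sound h))
    refine Quotient.sound (MulAction.orbitRel_apply.mpr
      (MulAction.mem_orbit_iff.mpr ⟨MulAut.conj c⁻¹, ?_⟩))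
    have : MulAut.conj c⁻¹ • b = c⁻¹ * b * c := by
      simp [MulAut.smul_def, MulAut.conj_apply]
    rw [this, ← hc]; group)

@[simp] lemma conjToOrbit_mk {G : Type*} [Group G] (a : G) :
    conjToOrbit (ConjClasses.mk a) = Quotient.mk (MulAction.orbitRel (MulAut G) G) a := rfl

/-- The map from `Out G` hitting all conjugacy classes inside the `Aut`-orbit of `g`. -/
def outToConj {G : Type*} [Group G] (g : G) :
    (MulAut G ⧸ (MulAut.conj : G →* MulAut G).range) → ConjClasses G :=
  Quotient.lift (fun φ : MulAut G => ConjClasses.mk (φ g)) (by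
    intro φ ψ h
    obtain ⟨c, hc⟩ := QuotientGroup.leftRel_apply.mp h
    rw [ConjClasses.mk_eq_mk_iff_isConj, isConj_iff]
    refine ⟨φ c, ?_⟩
    have hψ : ψ = φ * MulAut.conj c := by rw [hc]; group
    rw [hψ]
    simp [MulAut.conj_apply, map_mul, map_inv])

@[simp] lemma outToConj_mk {G : Type*} [Group G] (g : G) (φ : MulAut G) :
    outToConj g (QuotientGroup.mk φ) = ConjClasses.mk (φ g) := rfl


/-- if `Out G = Aut G / Inn G` is finite of cardinality `d`, then for
all `n`, `α(n) ≤ γ(n) ≤ d · α(n)`, and hence the automorphic and conjugacy growth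
functions are equivalent. -/
theorem automorphic_growth_equiv_conjugacy_growth_of_finite_out {G : Type*} [Group G]
    (S : Finset G) (hS : Subgroup.closure (S : Set G) = ⊤)
    (d : ℕ)
    (hfin : Finite (MulAut G ⧸ (MulAut.conj : G →* MulAut G).range))
    (hd : Nat.card (MulAut G ⧸ (MulAut.conj : G →* MulAut G).range) = d) :
    (∀ n : ℕ,
      autGrowth (S : Set G) n ≤ conjGrowth (S : Set G) n ∧
      conjGrowth (S : Set G) n ≤ d * autGrowth (S : Set G) n) ∧
    GrowthEquiv (autGrowth (S : Set G)) (conjGrowth (S : Set G)) := by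
  classical
  have hd1 : 0 < d := by
    rw [← hd]; exact Nat.card_pos
  have conjGrowth_mono : ∀ {n m : ℕ}, n ≤ m →
      conjGrowth (S : Set G) n ≤ conjGrowth (S : Set G) m := by
    intro n m h
    exact Set.ncard_le_ncard (Set.image_mono (wordBall_mono _ h))
      ((wordBall_finite S m).image _)
  have autGrowth_mono : ∀ {n m : ℕ}, n ≤ m →
      autGrowth (S : Set G) n ≤ autGrowth (S : Set G) m := by
    intro n m h
    exact Set.ncard_le_ncard (Set.image_mono (wordBall_mono _ h))
      ((wordBall_finite S m).image _)
  have key : ∀ n : ℕ,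
      autGrowth (S : Set G) n ≤ conjGrowth (S : Set G) n ∧
      conjGrowth (S : Set G) n ≤ d * autGrowth (S : Set G) n := by
    intro n
    set B := wordBall (S : Set G) n with hB
    have hBfin : B.Finite := wordBall_finite S n
    set Bf : Finset G := hBfin.toFinset with hBf
    have hBc : (Bf : Set G) = B := hBfin.coe_toFinset
    have himg : Quotient.mk (MulAction.orbitRel (MulAut G) G) '' B
        = conjToOrbit '' ((ConjClasses.mk : G → ConjClasses G) '' B) := by
      rw [← Set.image_comp]; rfl
    have hconj_card : conjGrowth (S : Set G) n
        = (Bf.image (ConjClasses.mk : G → ConjClasses G)).card := by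
      rw [conjGrowth, ← hB, ← hBc, ← Finset.coe_image, Set.ncard_coe_finset]
    have haut_card : autGrowth (S : Set G) n
        = (Bf.image (Quotient.mk (MulAction.orbitRel (MulAut G) G))).card := by
      rw [autGrowth, ← hB, ← hBc, ← Finset.coe_image, Set.ncard_coe_finset]
    constructor
    · rw [autGrowth, ← hB, himg]
      exact Set.ncard_image_le (hBfin.image _)
    · rw [hconj_card, haut_card]
      have himgf : (Bf.image (ConjClasses.mk : G → ConjClasses G)).image conjToOrbit
          = Bf.image (Quotient.mk (MulAction.orbitRel (MulAut G) G)) := by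
        rw [Finset.image_image]; rfl
      rw [← himgf]
      apply Finset.card_le_mul_card_image
      intro t _
      haveI : Fintype (MulAut G ⧸ (MulAut.conj : G →* MulAut G).range) := Fintype.ofFinite _
      calc ((Bf.image (ConjClasses.mk : G → ConjClasses G)).filter
              (fun c => conjToOrbit c = t)).card
          ≤ (Finset.univ.image (outToConj t.out)).card := by
            apply Finset.card_le_card
            intro c hc
            simp only [Finset.mem_filter, Finset.mem_image] at hc
            obtain ⟨⟨a, _, rfl⟩, hct⟩ := hc
            have hqa : Quotient.mk (MulAction.orbitRel (MulAut G) G) a = t := hct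
            have hqa' : Quotient.mk (MulAction.orbitRel (MulAut G) G) a
                = Quotient.mk (MulAction.orbitRel (MulAut G) G) t.out := by
              rw [hqa, Quotient.out_eq]
            have horb : a ∈ MulAction.orbit (MulAut G) t.out :=
              MulAction.orbitRel_apply.mp (Quotient.exact hqa')
            obtain ⟨φ, hφ⟩ := MulAction.mem_orbit_iff.mp horb
            simp only [Finset.mem_image, Finset.mem_univ, true_and]
            exact ⟨QuotientGroup.mk φ, by rw [outToConj_mk, ← MulAut.smul_def, hφ]⟩
        _ ≤ Finset.univ.card := Finset.card_image_le
        _ = d := by rw [Finset.card_univ, ← Nat.card_eq_fintype_card, hd]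
  refine ⟨key, ?_, ?_⟩
  · refine ⟨1, one_pos, fun n => ?_⟩
    calc autGrowth (S : Set G) n ≤ conjGrowth (S : Set G) n := (key n).1
      _ ≤ conjGrowth (S : Set G) (1 * n + 1) := conjGrowth_mono (by omega)
      _ ≤ 1 * conjGrowth (S : Set G) (1 * n + 1) + 1 := by omega
  · refine ⟨d, hd1, fun n => ?_⟩
    calc conjGrowth (S : Set G) n ≤ d * autGrowth (S : Set G) n := (key n).2
      _ ≤ d * autGrowth (S : Set G) (d * n + d) :=
          Nat.mul_le_mul_left d (autGrowth_mono (by nlinarith))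
      _ ≤ d * autGrowth (S : Set G) (d * n + d) + d := by omega
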